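/- The function 𝓕 has exactly m zeros on ℝ ∖ {σ₁, …, σ_m}: there exist real numbers μ₁, …, μ_m with 𝓕(μ_j) = 0 for every j, satisfying σ_j < μ_j < σ_{j+1} for j = 1, …, m−1 and σ_m < μ_m < ∞; moreover 𝓕(λ) ≠ 0 for every real λ ∉ {μ₁, …, μ_m} ∪ {σ₁, …, σ_m}. -/

import Mathlib

open Filter Set Topology

private lemma auxF_hasDerivAt (m : ℕ) (σ ρ : ℕ → ℝ) (F : ℝ → ℝ)
    (hF : ∀ lam : ℝ, F lam = 1 + ∑ j ∈ Finset.range m, σ j * ρ j / (σ j - lam))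
    {x : ℝ} (hx : ∀ j, j < m → x ≠ σ j) :
    HasDerivAt F (∑ j ∈ Finset.range m, σ j * ρ j / (σ j - x) ^ 2) x := by
  have hFe : F = fun lam => 1 + ∑ j ∈ Finset.range m, σ j * ρ j / (σ j - lam) := funext hF
  rw [hFe]
  refine HasDerivAt.const_add 1 ?_
  refine HasDerivAt.fun_sum ?_
  intro j hj
  have hne : σ j - x ≠ 0 := sub_ne_zero.mpr ((hx j (Finset.mem_range.mp hj)).symm)
  have h1 : HasDerivAt (fun y : ℝ => σ j - y) (-1) x := (hasDerivAt_id x).const_sub (σ j)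
  have h3 := (h1.inv hne).const_mul (σ j * ρ j)
  have e1 : (fun y : ℝ => σ j * ρ j * (σ j - y)⁻¹) = fun y => σ j * ρ j / (σ j - y) := by
    funext y; rw [div_eq_mul_inv]
  have e2 : σ j * ρ j * (-(-1) / (σ j - x) ^ 2) = σ j * ρ j / (σ j - x) ^ 2 := by ring
  simp only [Pi.inv_apply] at h3
  rw [e1, e2] at h3
  exact h3

private lemma auxF_continuousAt (m : ℕ) (σ ρ : ℕ → ℝ) (F : ℝ → ℝ)
    (hF : ∀ lam : ℝ, F lam = 1 + ∑ j ∈ Finset.range m, σ j * ρ j / (σ j - lam))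
    {x : ℝ} (hx : ∀ j, j < m → x ≠ σ j) : ContinuousAt F x :=
  (auxF_hasDerivAt m σ ρ F hF hx).continuousAt

private lemma auxF_strictMonoOn (m : ℕ) (hm : 1 ≤ m) (σ ρ : ℕ → ℝ)
    (hσpos : ∀ j, j < m → 0 < σ j) (hρ : ∀ j, j < m → 0 < ρ j) (F : ℝ → ℝ)
    (hF : ∀ lam : ℝ, F lam = 1 + ∑ j ∈ Finset.range m, σ j * ρ j / (σ j - lam))
    (s : Set ℝ) (hconv : Convex ℝ s) (hopen : IsOpen s)
    (hs : ∀ x ∈ s, ∀ j, j < m → x ≠ σ j) :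
    StrictMonoOn F s := by
  refine strictMonoOn_of_deriv_pos hconv ?_ ?_
  · intro x hx
    exact (auxF_continuousAt m σ ρ F hF (hs x hx)).continuousWithinAt
  · intro x hx
    rw [hopen.interior_eq] at hx
    rw [(auxF_hasDerivAt m σ ρ F hF (hs x hx)).deriv]
    refine Finset.sum_pos ?_ ⟨0, Finset.mem_range.mpr hm⟩
    intro j hj
    have hj' := Finset.mem_range.mp hj
    have hne : σ j - x ≠ 0 := sub_ne_zero.mpr ((hs x hx j hj').symm)
    exact div_pos (mul_pos (hσpos j hj') (hρ j hj')) (by positivity)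

/-- F tends to -∞ as λ → σ j from the right. -/
private lemma auxF_tendsto_atBot (m : ℕ) (σ ρ : ℕ → ℝ)
    (hσpos : ∀ j, j < m → 0 < σ j) (hρ : ∀ j, j < m → 0 < ρ j) (F : ℝ → ℝ)
    (hF : ∀ lam : ℝ, F lam = 1 + ∑ j ∈ Finset.range m, σ j * ρ j / (σ j - lam))
    {j : ℕ} (hj : j < m) (hσne : ∀ k, k < m → k ≠ j → σ k ≠ σ j) :
    Tendsto F (𝓝[>] (σ j)) atBot := by
  have hFe : F = fun lam => (1 + ∑ k ∈ (Finset.range m).erase j, σ k * ρ k / (σ k - lam))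
      + σ j * ρ j / (σ j - lam) := by
    funext lam
    rw [hF lam, add_assoc]
    congr 1
    exact (Finset.add_sum_erase _ _ (Finset.mem_range.mpr hj)).symm.trans (by rw [add_comm])
  rw [hFe]
  have hg : Tendsto (fun lam => 1 + ∑ k ∈ (Finset.range m).erase j, σ k * ρ k / (σ k - lam))
      (𝓝[>] (σ j)) (𝓝 (1 + ∑ k ∈ (Finset.range m).erase j, σ k * ρ k / (σ k - σ j))) := by
    refine Tendsto.mono_left ?_ nhdsWithin_le_nhds
    refine (tendsto_const_nhds.add (tendsto_finset_sum _ ?_))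
    intro k hk
    have hk1 := Finset.mem_range.mp (Finset.mem_erase.mp hk).2
    have hk2 : σ k - σ j ≠ 0 := sub_ne_zero.mpr (hσne k hk1 (Finset.mem_erase.mp hk).1)
    exact (tendsto_const_nhds.div (tendsto_const_nhds.sub tendsto_id) hk2)
  refine hg.add_atBot ?_
  -- σ j * ρ j / (σ j - lam) = -(σ j * ρ j * (lam - σ j)⁻¹)
  have he : (fun lam => σ j * ρ j / (σ j - lam)) = fun lam => -(σ j * ρ j * (lam - σ j)⁻¹) := by
    funext lam
    rw [div_eq_mul_inv, show σ j - lam = -(lam - σ j) from by ring, inv_neg, mul_neg]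
  rw [he]
  refine Filter.tendsto_neg_atTop_atBot.comp ?_
  refine Tendsto.const_mul_atTop (mul_pos (hσpos j hj) (hρ j hj)) ?_
  have hsub : Tendsto (fun lam : ℝ => lam - σ j) (𝓝[>] (σ j)) (𝓝[>] 0) := by
    refine tendsto_nhdsWithin_of_tendsto_nhds_of_eventually_within _ ?_ ?_
    · have : Tendsto (fun lam : ℝ => lam - σ j) (𝓝 (σ j)) (𝓝 (σ j - σ j)) :=
        tendsto_id.sub (tendsto_const_nhds : Tendsto (fun _ : ℝ => σ j) (𝓝 (σ j)) (𝓝 (σ j)))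
      simpa using this.mono_left nhdsWithin_le_nhds
    · filter_upwards [self_mem_nhdsWithin] with x hx
      exact sub_pos.mpr (Set.mem_Ioi.mp hx)
  exact tendsto_inv_nhdsGT_zero.comp hsub

/-- F tends to +∞ as λ → σ j from the left. -/
private lemma auxF_tendsto_atTop (m : ℕ) (σ ρ : ℕ → ℝ)
    (hσpos : ∀ j, j < m → 0 < σ j) (hρ : ∀ j, j < m → 0 < ρ j) (F : ℝ → ℝ)
    (hF : ∀ lam : ℝ, F lam = 1 + ∑ j ∈ Finset.range m, σ j * ρ j / (σ j - lam))
    {j : ℕ} (hj : j < m) (hσne : ∀ k, k < m → k ≠ j → σ k ≠ σ j) :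
    Tendsto F (𝓝[<] (σ j)) atTop := by
  have hFe : F = fun lam => (1 + ∑ k ∈ (Finset.range m).erase j, σ k * ρ k / (σ k - lam))
      + σ j * ρ j / (σ j - lam) := by
    funext lam
    rw [hF lam, add_assoc]
    congr 1
    exact (Finset.add_sum_erase _ _ (Finset.mem_range.mpr hj)).symm.trans (by rw [add_comm])
  rw [hFe]
  have hg : Tendsto (fun lam => 1 + ∑ k ∈ (Finset.range m).erase j, σ k * ρ k / (σ k - lam))
      (𝓝[<] (σ j)) (𝓝 (1 + ∑ k ∈ (Finset.range m).erase j, σ k * ρ k / (σ k - σ j))) := by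
    refine Tendsto.mono_left ?_ nhdsWithin_le_nhds
    refine (tendsto_const_nhds.add (tendsto_finset_sum _ ?_))
    intro k hk
    have hk1 := Finset.mem_range.mp (Finset.mem_erase.mp hk).2
    have hk2 : σ k - σ j ≠ 0 := sub_ne_zero.mpr (hσne k hk1 (Finset.mem_erase.mp hk).1)
    exact (tendsto_const_nhds.div (tendsto_const_nhds.sub tendsto_id) hk2)
  refine hg.add_atTop ?_
  have he : (fun lam => σ j * ρ j / (σ j - lam)) = fun lam => σ j * ρ j * (σ j - lam)⁻¹ := by
    funext lam; rw [div_eq_mul_inv]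
  rw [he]
  refine Tendsto.const_mul_atTop (mul_pos (hσpos j hj) (hρ j hj)) ?_
  have hsub : Tendsto (fun lam : ℝ => σ j - lam) (𝓝[<] (σ j)) (𝓝[>] 0) := by
    refine tendsto_nhdsWithin_of_tendsto_nhds_of_eventually_within _ ?_ ?_
    · have : Tendsto (fun lam : ℝ => σ j - lam) (𝓝 (σ j)) (𝓝 (σ j - σ j)) :=
        (tendsto_const_nhds : Tendsto (fun _ : ℝ => σ j) (𝓝 (σ j)) (𝓝 (σ j))).sub tendsto_id
      simpa using this.mono_left nhdsWithin_le_nhds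
    · filter_upwards [self_mem_nhdsWithin] with x hx
      exact sub_pos.mpr (Set.mem_Iio.mp hx)
  exact tendsto_inv_nhdsGT_zero.comp hsub

/-- F tends to 1 at +∞. -/
private lemma auxF_tendsto_one (m : ℕ) (σ ρ : ℕ → ℝ) (F : ℝ → ℝ)
    (hF : ∀ lam : ℝ, F lam = 1 + ∑ j ∈ Finset.range m, σ j * ρ j / (σ j - lam)) :
    Tendsto F atTop (𝓝 1) := by
  have hFe : F = fun lam => 1 + ∑ j ∈ Finset.range m, σ j * ρ j / (σ j - lam) := funext hF
  rw [hFe]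
  have : Tendsto (fun lam => ∑ j ∈ Finset.range m, σ j * ρ j / (σ j - lam)) atTop
      (𝓝 (∑ j ∈ Finset.range m, (0:ℝ))) := by
    refine tendsto_finset_sum _ ?_
    intro j _
    have he : (fun lam : ℝ => σ j * ρ j / (σ j - lam)) = fun lam => -(σ j * ρ j * (lam - σ j)⁻¹) := by
      funext lam; rw [div_eq_mul_inv, show σ j - lam = -(lam - σ j) by ring, inv_neg, mul_neg]
    rw [he]
    have h1 : Tendsto (fun lam : ℝ => lam - σ j) atTop atTop :=
      tendsto_atTop_add_const_right _ _ tendsto_id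
    have := (h1.inv_tendsto_atTop).const_mul (σ j * ρ j)
    simpa using this.neg
  rw [Finset.sum_const_zero] at this
  have h2 := (tendsto_const_nhds : Tendsto (fun _ : ℝ => (1:ℝ)) atTop (𝓝 1)).add this
  simpa using h2

/-- Existence of a zero in an open interval with blow-ups at both ends. -/
private lemma aux_exists_zero_Ioo (F : ℝ → ℝ) {a b : ℝ} (hab : a < b)
    (hcont : ∀ x ∈ Ioo a b, ContinuousAt F x)
    (h1 : Tendsto F (𝓝[>] a) atBot) (h2 : Tendsto F (𝓝[<] b) atTop) :
    ∃ μ ∈ Ioo a b, F μ = 0 := by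
  have hmem : Ioo a b ∈ 𝓝[>] a := Ioo_mem_nhdsGT_of_mem ⟨le_refl a, hab⟩
  have hev : ∀ᶠ x in 𝓝[>] a, F x < 0 := h1.eventually (eventually_lt_atBot 0)
  obtain ⟨a', ha'neg, ha'ab⟩ := (hev.and (eventually_of_mem hmem (fun x hx => hx))).exists
  have hmem2 : Ioo a' b ∈ 𝓝[<] b := Ioo_mem_nhdsLT_of_mem ⟨ha'ab.2, le_refl b⟩
  have hev2 : ∀ᶠ x in 𝓝[<] b, 0 < F x := h2.eventually (eventually_gt_atTop 0)
  obtain ⟨b', hb'1, hb'2⟩ := (hev2.and (eventually_of_mem hmem2 (fun x hx => hx))).exists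
  have hsub : Icc a' b' ⊆ Ioo a b := fun x hx =>
    ⟨lt_of_lt_of_le ha'ab.1 hx.1, lt_of_le_of_lt hx.2 hb'2.2⟩
  have hcont' : ContinuousOn F (Icc a' b') := fun x hx =>
    (hcont x (hsub hx)).continuousWithinAt
  have h0 : (0:ℝ) ∈ Icc (F a') (F b') := ⟨le_of_lt ha'neg, le_of_lt hb'1⟩
  obtain ⟨μ, hμ1, hμ2⟩ := intermediate_value_Icc (le_of_lt hb'2.1) hcont' h0
  exact ⟨μ, hsub hμ1, hμ2⟩

/-- Existence of a zero in (a, ∞). -/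
private lemma aux_exists_zero_Ioi (F : ℝ → ℝ) (a : ℝ)
    (hcont : ∀ x ∈ Ioi a, ContinuousAt F x)
    (h1 : Tendsto F (𝓝[>] a) atBot) (h2 : Tendsto F atTop (𝓝 1)) :
    ∃ μ ∈ Ioi a, F μ = 0 := by
  have hev : ∀ᶠ x in 𝓝[>] a, F x < 0 := h1.eventually (eventually_lt_atBot 0)
  obtain ⟨a', ha'1, ha'2⟩ := (hev.and self_mem_nhdsWithin).exists
  have hev2 : ∀ᶠ x in atTop, 0 < F x := h2.eventually (eventually_gt_nhds one_pos)
  obtain ⟨b', hb'1, hb'2⟩ := (hev2.and (eventually_gt_atTop a')).exists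
  have hsub : Icc a' b' ⊆ Ioi a := fun x hx => lt_of_lt_of_le ha'2 hx.1
  have hcont' : ContinuousOn F (Icc a' b') := fun x hx =>
    (hcont x (hsub hx)).continuousWithinAt
  have h0 : (0:ℝ) ∈ Icc (F a') (F b') := ⟨le_of_lt ha'1, le_of_lt hb'1⟩
  obtain ⟨μ, hμ1, hμ2⟩ := intermediate_value_Icc (le_of_lt hb'2) hcont' h0
  exact ⟨μ, hsub hμ1, hμ2⟩



/-!
STATEMENT 5: 𝓕(λ) = 1 + ∑_{j<m} σ_j ρ_j/(σ_j − λ) has exactly m zeros on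
ℝ ∖ {σ_1, …, σ_m}: zeros μ_j with σ_j < μ_j < σ_{j+1} (j = 1, …, m−1) and
σ_m < μ_m < ∞, and no other zeros. (Indices are 0-based.)
-/

theorem F_has_exactly_m_zeros
    (m : ℕ) (hm : 1 ≤ m)
    (σ ρ : ℕ → ℝ)
    (hσ0 : 0 < σ 0)
    (hσmono : ∀ j, j + 1 < m → σ j < σ (j + 1))
    (hρ : ∀ j, j < m → 0 < ρ j)
    (F : ℝ → ℝ)
    (hF : ∀ lam : ℝ, F lam = 1 + ∑ j ∈ Finset.range m, σ j * ρ j / (σ j - lam)) :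
    ∃ μ : ℕ → ℝ,
      (∀ j, j < m → F (μ j) = 0) ∧
      (∀ j, j < m → σ j < μ j) ∧
      (∀ j, j + 1 < m → μ j < σ (j + 1)) ∧
      (∀ lam : ℝ, (∀ j, j < m → lam ≠ σ j) → (∀ j, j < m → lam ≠ μ j) →
        F lam ≠ 0) := by
  classical
  -- monotonicity facts
  have hle : ∀ j, j < m → ∀ i, i ≤ j → σ i ≤ σ j := by
    intro j
    induction j with
    | zero => intro _ i hi; simp [Nat.le_zero.mp hi]
    | succ k ih =>
      intro hk i hi
      rcases Nat.lt_succ_iff_lt_or_eq.mp (Nat.lt_succ_of_le hi) with h | h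
      · exact le_trans (ih (by omega) i (by omega)) (le_of_lt (hσmono k hk))
      · simp [h]
  have hlt : ∀ i j, i < j → j < m → σ i < σ j := by
    intro i j hij hjm
    have h1 : σ i ≤ σ (j - 1) := hle (j-1) (by omega) i (by omega)
    have h2 : σ (j - 1) < σ (j - 1 + 1) := hσmono (j-1) (by omega)
    have : j - 1 + 1 = j := by omega
    rw [this] at h2
    exact lt_of_le_of_lt h1 h2
  have hσpos : ∀ j, j < m → 0 < σ j := fun j hj =>
    lt_of_lt_of_le hσ0 (hle j hj 0 (Nat.zero_le _))
  have hσne : ∀ j, j < m → ∀ k, k < m → k ≠ j → σ k ≠ σ j := by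
    intro j hj k hk hkj
    rcases lt_or_gt_of_ne hkj with h | h
    · exact ne_of_lt (hlt k j h hj)
    · exact ne_of_gt (hlt j k h hk)
  -- the intervals
  set I : ℕ → Set ℝ := fun j => if j + 1 < m then Set.Ioo (σ j) (σ (j+1)) else Set.Ioi (σ j)
    with hI
  have havoid : ∀ j, j < m → ∀ x ∈ I j, ∀ k, k < m → x ≠ σ k := by
    intro j hj x hx k hk
    simp only [hI] at hx
    by_cases h : j + 1 < m
    · rw [if_pos h] at hx
      rcases le_or_gt k j with h1 | h1
      · exact ne_of_gt (lt_of_le_of_lt (hle j hj k h1) hx.1)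
      · exact ne_of_lt (lt_of_lt_of_le hx.2 (hle k hk (j+1) h1))
    · rw [if_neg h] at hx
      have h1 : k ≤ j := by omega
      exact ne_of_gt (lt_of_le_of_lt (hle j hj k h1) hx)
  have hIopen : ∀ j, IsOpen (I j) := by
    intro j; simp only [hI]; split_ifs
    · exact isOpen_Ioo
    · exact isOpen_Ioi
  have hIconv : ∀ j, Convex ℝ (I j) := by
    intro j; simp only [hI]; split_ifs
    · exact convex_Ioo _ _
    · exact convex_Ioi _
  have hmono : ∀ j, j < m → StrictMonoOn F (I j) := fun j hj =>
    auxF_strictMonoOn m hm σ ρ hσpos hρ F hF (I j) (hIconv j) (hIopen j) (havoid j hj)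
  have hcontI : ∀ j, j < m → ∀ x ∈ I j, ContinuousAt F x := fun j hj x hx =>
    auxF_continuousAt m σ ρ F hF (havoid j hj x hx)
  have hex : ∀ j, j < m → ∃ x, x ∈ I j ∧ F x = 0 := by
    intro j hj
    by_cases h : j + 1 < m
    · have hab : σ j < σ (j+1) := hσmono j h
      have h1 := auxF_tendsto_atBot m σ ρ hσpos hρ F hF hj (hσne j hj)
      have h2 := auxF_tendsto_atTop m σ ρ hσpos hρ F hF h (hσne (j+1) h)
      obtain ⟨μ, hμ1, hμ2⟩ := aux_exists_zero_Ioo F hab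
        (by rw [hI] at *; simpa [if_pos h] using hcontI j hj) h1 h2
      exact ⟨μ, by rw [hI]; simpa [if_pos h] using hμ1, hμ2⟩
    · have h1 := auxF_tendsto_atBot m σ ρ hσpos hρ F hF hj (hσne j hj)
      have h2 := auxF_tendsto_one m σ ρ F hF
      obtain ⟨μ, hμ1, hμ2⟩ := aux_exists_zero_Ioi F (σ j)
        (by rw [hI] at *; simpa [if_neg h] using hcontI j hj) h1 h2
      exact ⟨μ, by rw [hI]; simpa [if_neg h] using hμ1, hμ2⟩
  set μ : ℕ → ℝ := fun j => if h : j < m then Classical.choose (hex j h) else 0 with hμdef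
  have hμI : ∀ j, j < m → μ j ∈ I j := by
    intro j hj
    rw [hμdef]; simp only [dif_pos hj]
    exact (Classical.choose_spec (hex j hj)).1
  have hμ0 : ∀ j, j < m → F (μ j) = 0 := by
    intro j hj
    rw [hμdef]; simp only [dif_pos hj]
    exact (Classical.choose_spec (hex j hj)).2
  have hμgt : ∀ j, j < m → σ j < μ j := by
    intro j hj
    have := hμI j hj
    simp only [hI] at this
    split_ifs at this with h
    · exact this.1
    · exact this
  have hμlt : ∀ j, j + 1 < m → μ j < σ (j + 1) := by
    intro j hj
    have := hμI j (by omega)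
    simp only [hI] at this
    rw [if_pos hj] at this
    exact this.2
  refine ⟨μ, hμ0, hμgt, hμlt, ?_⟩
  intro lam hneσ hneμ hF0
  rcases lt_or_ge lam (σ 0) with hcase | hcase
  · -- lam below all poles: F lam > 0
    have hpos : 0 < F lam := by
      rw [hF]
      have hsum : 0 ≤ ∑ j ∈ Finset.range m, σ j * ρ j / (σ j - lam) := by
        refine Finset.sum_nonneg ?_
        intro j hj
        have hj' := Finset.mem_range.mp hj
        have : 0 < σ j - lam := by
          have := hle j hj' 0 (Nat.zero_le _)
          linarith
        exact le_of_lt (div_pos (mul_pos (hσpos j hj') (hρ j hj')) this)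
      linarith
    exact absurd hF0 (ne_of_gt hpos)
  · -- find the interval containing lam
    have h0lt : σ 0 < lam := lt_of_le_of_ne hcase (Ne.symm (hneσ 0 hm))
    set T := (Finset.range m).filter (fun j => σ j < lam) with hT
    have hTne : T.Nonempty := ⟨0, by rw [hT]; exact Finset.mem_filter.mpr ⟨Finset.mem_range.mpr (by omega), h0lt⟩⟩
    set j := T.max' hTne with hjdef
    have hjT : j ∈ T := T.max'_mem hTne
    have hjm : j < m := Finset.mem_range.mp (Finset.mem_filter.mp hjT).1
    have hjlt : σ j < lam := (Finset.mem_filter.mp hjT).2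
    have hlamI : lam ∈ I j := by
      simp only [hI]
      split_ifs with h
      · refine ⟨hjlt, ?_⟩
        have hnotin : j + 1 ∉ T := by
          intro hin
          have := Finset.le_max' T (j+1) hin
          omega
        have : ¬ σ (j+1) < lam := by
          intro hc
          exact hnotin (by rw [hT]; exact Finset.mem_filter.mpr ⟨Finset.mem_range.mpr h, hc⟩)
        exact lt_of_le_of_ne (le_of_not_gt this) (hneσ (j+1) h)
      · exact hjlt
    have hne : F lam ≠ F (μ j) :=
      fun hc => (hneμ j hjm) ((hmono j hjm).injOn hlamI (hμI j hjm) hc)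
    rw [hμ0 j hjm] at hne
    exact hne hF0
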